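/- Let X be a Banach space with the λ-bounded approximation property and T ∈ L(X). Define |T| = sup{ liminf_i liminf_j ‖T x_i − T x_j‖ : (x_i) a sequence in the unit ball of X }. Then |·| is a seminorm on L(X) satisfying (1+λ)^{-2} · dist(T, K(X)) ≤ |T| ≤ 2 · dist(T, K(X)), where K(X) denotes the compact operators and dist is the operator-norm distance. -/

import Mathlib

open Filter
open Topology

variable {X : Type*} [NormedAddCommGroup X] [NormedSpace ℂ X]

/-- `|T| = sup { liminf_i liminf_j ‖T x_i − T x_j‖ : (x_i) ⊆ B_X }`. -/
noncomputable def opSemi (T : X →L[ℂ] X) : ℝ :=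
  sSup { c : ℝ | ∃ x : ℕ → X, (∀ i, ‖x i‖ ≤ 1) ∧
    c = liminf (fun i => liminf (fun j => ‖T (x i) - T (x j)‖) atTop) atTop }

/-- distance to the ideal of compact operators -/
noncomputable def distK (T : X →L[ℂ] X) : ℝ :=
  Metric.infDist T {S : X →L[ℂ] X | IsCompactOperator (⇑S)}


lemma liminf_ge_of_bounds {u : ℕ → ℝ} {m M : ℝ} (h0 : ∀ n, m ≤ u n) (h1 : ∀ n, u n ≤ M) :
    m ≤ liminf u atTop :=
  le_liminf_of_le ((isBoundedUnder_of ⟨M, h1⟩).isCoboundedUnder_ge) (Eventually.of_forall h0)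

lemma liminf_le_of_bounds {u : ℕ → ℝ} {m M : ℝ} (h0 : ∀ n, m ≤ u n) (h1 : ∀ n, u n ≤ M) :
    liminf u atTop ≤ M :=
  liminf_le_of_frequently_le (Frequently.of_forall h1) (isBoundedUnder_of ⟨m, h0⟩)

lemma liminf_le_liminf_comp {u : ℕ → ℝ} {φ : ℕ → ℕ} (hφ : Tendsto φ atTop atTop)
    {m M : ℝ} (h0 : ∀ n, m ≤ u n) (h1 : ∀ n, u n ≤ M) :
    liminf u atTop ≤ liminf (u ∘ φ) atTop := by
  have : liminf u atTop ≤ liminf u (map φ atTop) :=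
    liminf_le_liminf_of_le hφ (isBoundedUnder_of ⟨m, h0⟩)
      ((isBoundedUnder_of (f := map φ atTop) ⟨M, fun x => h1 _⟩).isCoboundedUnder_ge)
  simpa only [Filter.liminf, Filter.map_map] using this

lemma exists_subseq_tendsto_pair {u v : ℕ → ℝ} {M : ℝ}
    (hu0 : ∀ n, 0 ≤ u n) (hu1 : ∀ n, u n ≤ M) (hv0 : ∀ n, 0 ≤ v n) (hv1 : ∀ n, v n ≤ M) :
    ∃ φ : ℕ → ℕ, StrictMono φ ∧ (∃ a, Tendsto (u ∘ φ) atTop (𝓝 a)) ∧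
      (∃ b, Tendsto (v ∘ φ) atTop (𝓝 b)) := by
  obtain ⟨a, -, φ, hφ, ha⟩ := tendsto_subseq_of_bounded (Metric.isBounded_Icc 0 M)
    (fun n => Set.mem_Icc.2 ⟨hu0 n, hu1 n⟩)
  obtain ⟨b, -, ψ, hψ, hb⟩ := tendsto_subseq_of_bounded (Metric.isBounded_Icc 0 M)
    (fun n => Set.mem_Icc.2 ⟨hv0 (φ n), hv1 (φ n)⟩)
  exact ⟨φ ∘ ψ, hφ.comp hψ, ⟨a, ha.comp hψ.tendsto_atTop⟩, ⟨b, hb⟩⟩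

lemma diagonal_extraction {a b : ℕ → ℕ → ℝ} {M : ℝ}
    (ha0 : ∀ i j, 0 ≤ a i j) (ha1 : ∀ i j, a i j ≤ M)
    (hb0 : ∀ i j, 0 ≤ b i j) (hb1 : ∀ i j, b i j ≤ M) :
    ∃ φ : ℕ → ℕ, StrictMono φ ∧ ∃ al be : ℕ → ℝ,
      (∀ k, Tendsto (fun l => a (φ k) (φ l)) atTop (𝓝 (al k))) ∧
      (∀ k, Tendsto (fun l => b (φ k) (φ l)) atTop (𝓝 (be k))) := by
  have step : ∀ (k : ℕ) (e : ℕ → ℕ), ∃ f : ℕ → ℕ, StrictMono f ∧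
      (∃ A, Tendsto (fun l => a (e k) (e (f l))) atTop (𝓝 A)) ∧
      (∃ B, Tendsto (fun l => b (e k) (e (f l))) atTop (𝓝 B)) := by
    intro k e
    obtain ⟨f, hf, hA, hB⟩ := exists_subseq_tendsto_pair (u := fun l => a (e k) (e l))
      (v := fun l => b (e k) (e l)) (fun n => ha0 _ _) (fun n => ha1 _ _)
      (fun n => hb0 _ _) (fun n => hb1 _ _)
    exact ⟨f, hf, hA, hB⟩
  choose f hfmono hA hB using step
  set E : ℕ → ℕ → ℕ := fun k => Nat.rec id (fun k ek => ek ∘ f k ek) k with hE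
  have hES : ∀ k, E (k + 1) = E k ∘ f k (E k) := fun k => rfl
  have hEmono : ∀ k, StrictMono (E k) := by
    intro k
    induction k with
    | zero => exact strictMono_id
    | succ k ih => exact (hES k) ▸ ih.comp (hfmono k (E k))
  -- decomposition
  have decomp : ∀ k l, k ≤ l → ∃ g : ℕ → ℕ, StrictMono g ∧ E l = E k ∘ g := by
    intro k l hkl
    induction l with
    | zero =>
      have : k = 0 := Nat.le_zero.1 hkl
      subst this; exact ⟨id, strictMono_id, rfl⟩
    | succ l ih =>
      rcases Nat.lt_or_ge k (l+1) with h | h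
      · obtain ⟨g, hg, hEg⟩ := ih (Nat.lt_succ_iff.1 h)
        exact ⟨g ∘ f l (E l), hg.comp (hfmono l (E l)), by rw [hES l, hEg]; rfl⟩
      · have : k = l + 1 := le_antisymm hkl h
        exact ⟨id, strictMono_id, by rw [this]; rfl⟩
  set φ : ℕ → ℕ := fun k => E k k with hφdef
  have hφ : StrictMono φ := by
    apply strictMono_nat_of_lt_succ
    intro k
    have h1 : φ (k+1) = E k (f k (E k) (k+1)) := by show E (k+1) (k+1) = _; rw [hES k]; rfl
    have h2 : k + 1 ≤ f k (E k) (k+1) := (hfmono k (E k)).le_apply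
    calc φ k = E k k := rfl
      _ < E k (f k (E k) (k+1)) := (hEmono k) (lt_of_lt_of_le (Nat.lt_succ_self k) h2)
      _ = φ (k+1) := h1.symm
  refine ⟨φ, hφ, ?_⟩
  choose al hal using hA
  choose be hbe using hB
  refine ⟨fun k => al k (E k), fun k => be k (E k), ?_, ?_⟩ <;>
  · intro k
    -- tail function
    have key : ∀ l, k + 1 ≤ l → ∃ m, l ≤ m ∧ φ l = E (k+1) m := by
      intro l hl
      obtain ⟨g, hg, hEg⟩ := decomp (k+1) l hl
      exact ⟨g l, hg.le_apply, by show E l l = _; rw [hEg]; rfl⟩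
    set h : ℕ → ℕ := fun l => if hl : k + 1 ≤ l then (key l hl).choose else 0 with hh
    have hhl : ∀ l, k + 1 ≤ l → l ≤ h l ∧ φ l = E (k+1) (h l) := by
      intro l hl
      simp only [hh, dif_pos hl]
      exact (key l hl).choose_spec
    have hht : Tendsto h atTop atTop :=
      tendsto_atTop_mono' atTop (eventually_atTop.2 ⟨k+1, fun l hl => (hhl l hl).1⟩) tendsto_id
    first
    | · have base : Tendsto (fun l => a (φ k) (E (k+1) l)) atTop (𝓝 (al k (E k))) := by
          have := hal k (E k); rw [hES k]; exact this
        refine (base.comp hht).congr' ?_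
        filter_upwards [eventually_atTop.2 ⟨k+1, fun l (hl : k+1 ≤ l) => hl⟩] with l hl
        exact congrArg (a (φ k)) ((hhl l hl).2.symm)
    | · have base : Tendsto (fun l => b (φ k) (E (k+1) l)) atTop (𝓝 (be k (E k))) := by
          have := hbe k (E k); rw [hES k]; exact this
        refine (base.comp hht).congr' ?_
        filter_upwards [eventually_atTop.2 ⟨k+1, fun l (hl : k+1 ≤ l) => hl⟩] with l hl
        exact congrArg (b (φ k)) ((hhl l hl).2.symm)




def semiSet (T : X →L[ℂ] X) : Set ℝ :=
  { c : ℝ | ∃ x : ℕ → X, (∀ i, ‖x i‖ ≤ 1) ∧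
    c = liminf (fun i => liminf (fun j => ‖T (x i) - T (x j)‖) atTop) atTop }

lemma opSemi_eq (T : X →L[ℂ] X) : opSemi T = sSup (semiSet T) := rfl

lemma zero_mem_semiSet (T : X →L[ℂ] X) : (0:ℝ) ∈ semiSet T := by
  refine ⟨fun _ => 0, fun _ => by simp, ?_⟩
  simp [liminf_const]

lemma dist_bound {T : X →L[ℂ] X} {x : ℕ → X} (hx : ∀ i, ‖x i‖ ≤ 1) (i j : ℕ) :
    ‖T (x i) - T (x j)‖ ≤ 2 * ‖T‖ := by
  calc ‖T (x i) - T (x j)‖ ≤ ‖T (x i)‖ + ‖T (x j)‖ := norm_sub_le _ _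
    _ ≤ ‖T‖ * ‖x i‖ + ‖T‖ * ‖x j‖ := add_le_add (T.le_opNorm _) (T.le_opNorm _)
    _ ≤ ‖T‖ * 1 + ‖T‖ * 1 := by
        have := hx i; have := hx j; gcongr
    _ = 2 * ‖T‖ := by ring

lemma semiSet_le {T : X →L[ℂ] X} {c : ℝ} (hc : c ∈ semiSet T) : c ≤ 2 * ‖T‖ := by
  obtain ⟨x, hx, rfl⟩ := hc
  refine liminf_le_of_bounds (m := 0) (fun i => ?_) (fun i => ?_)
  · exact liminf_ge_of_bounds (fun j => norm_nonneg _) (fun j => dist_bound hx i j)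
  · exact liminf_le_of_bounds (fun j => norm_nonneg _) (fun j => dist_bound hx i j)

lemma bddAbove_semiSet (T : X →L[ℂ] X) : BddAbove (semiSet T) :=
  ⟨2 * ‖T‖, fun _ hc => semiSet_le hc⟩

lemma le_opSemi {T : X →L[ℂ] X} {c : ℝ} (hc : c ∈ semiSet T) : c ≤ opSemi T :=
  le_csSup (bddAbove_semiSet T) hc

lemma opSemi_nonneg (T : X →L[ℂ] X) : 0 ≤ opSemi T := le_opSemi (zero_mem_semiSet T)

lemma opSemi_le {T : X →L[ℂ] X} {m : ℝ} (h : ∀ c ∈ semiSet T, c ≤ m) : opSemi T ≤ m :=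
  csSup_le ⟨0, zero_mem_semiSet T⟩ h


lemma opSemi_add_le (T S : X →L[ℂ] X) : opSemi (T + S) ≤ opSemi T + opSemi S := by
  apply opSemi_le
  rintro c ⟨x, hx, rfl⟩
  set a : ℕ → ℕ → ℝ := fun i j => ‖T (x i) - T (x j)‖ with ha
  set b : ℕ → ℕ → ℝ := fun i j => ‖S (x i) - S (x j)‖ with hb
  set M : ℝ := 2 * ‖T‖ + 2 * ‖S‖ with hM
  have ha0 : ∀ i j, 0 ≤ a i j := fun i j => norm_nonneg _
  have hb0 : ∀ i j, 0 ≤ b i j := fun i j => norm_nonneg _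
  have haM : ∀ i j, a i j ≤ M := fun i j =>
    (dist_bound hx i j).trans (le_add_of_nonneg_right (by positivity))
  have hbM : ∀ i j, b i j ≤ M := fun i j =>
    (dist_bound hx i j).trans (le_add_of_nonneg_left (by positivity))
  obtain ⟨φ, hφ, al, be, hal, hbe⟩ := diagonal_extraction ha0 haM hb0 hbM
  have hal0 : ∀ k, 0 ≤ al k := fun k =>
    ge_of_tendsto (hal k) (Eventually.of_forall fun l => ha0 _ _)
  have halM : ∀ k, al k ≤ M := fun k =>
    le_of_tendsto (hal k) (Eventually.of_forall fun l => haM _ _)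
  have hbe0 : ∀ k, 0 ≤ be k := fun k =>
    ge_of_tendsto (hbe k) (Eventually.of_forall fun l => hb0 _ _)
  have hbeM : ∀ k, be k ≤ M := fun k =>
    le_of_tendsto (hbe k) (Eventually.of_forall fun l => hbM _ _)
  obtain ⟨ψ, hψ, ⟨A, hA⟩, ⟨B, hB⟩⟩ := exists_subseq_tendsto_pair hal0 halM hbe0 hbeM
  set χ : ℕ → ℕ := φ ∘ ψ with hχ
  have hχm : StrictMono χ := hφ.comp hψ
  have hχt : Tendsto χ atTop atTop := hχm.tendsto_atTop
  have haχ : ∀ k, Tendsto (fun l => a (χ k) (χ l)) atTop (𝓝 (al (ψ k))) :=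
    fun k => (hal (ψ k)).comp hψ.tendsto_atTop
  have hbχ : ∀ k, Tendsto (fun l => b (χ k) (χ l)) atTop (𝓝 (be (ψ k))) :=
    fun k => (hbe (ψ k)).comp hψ.tendsto_atTop
  -- A and B are elements of the respective semiSets
  have hAmem : A ∈ semiSet T := by
    refine ⟨x ∘ χ, fun i => hx _, ?_⟩
    have inner : (fun i => liminf (fun j => ‖T ((x ∘ χ) i) - T ((x ∘ χ) j)‖) atTop)
        = fun i => al (ψ i) := funext fun i => (haχ i).liminf_eq
    rw [inner, show (fun i => al (ψ i)) = al ∘ ψ from rfl, hA.liminf_eq]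
  have hBmem : B ∈ semiSet S := by
    refine ⟨x ∘ χ, fun i => hx _, ?_⟩
    have inner : (fun i => liminf (fun j => ‖S ((x ∘ χ) i) - S ((x ∘ χ) j)‖) atTop)
        = fun i => be (ψ i) := funext fun i => (hbχ i).liminf_eq
    rw [inner, show (fun i => be (ψ i)) = be ∘ ψ from rfl, hB.liminf_eq]
  -- now the estimate
  set c : ℕ → ℕ → ℝ := fun i j => ‖(T + S) (x i) - (T + S) (x j)‖ with hcdef
  have hc0 : ∀ i j, 0 ≤ c i j := fun i j => norm_nonneg _
  have hcab : ∀ i j, c i j ≤ a i j + b i j := by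
    intro i j
    have : (T + S) (x i) - (T + S) (x j) = (T (x i) - T (x j)) + (S (x i) - S (x j)) := by
      simp [ContinuousLinearMap.add_apply]; abel
    rw [hcdef]; simp only [this]; exact norm_add_le _ _
  have hcM : ∀ i j, c i j ≤ M := fun i j => (hcab i j).trans (add_le_add (dist_bound hx i j) (dist_bound hx i j))
  set g : ℕ → ℝ := fun i => liminf (fun j => c i j) atTop with hg
  have hg0 : ∀ i, 0 ≤ g i := fun i => liminf_ge_of_bounds (fun j => hc0 i j) (fun j => hcM i j)
  have hgM : ∀ i, g i ≤ M := fun i => liminf_le_of_bounds (fun j => hc0 i j) (fun j => hcM i j)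
  have step1 : liminf g atTop ≤ liminf (g ∘ χ) atTop :=
    liminf_le_liminf_comp hχt hg0 hgM
  have step2 : ∀ k, g (χ k) ≤ al (ψ k) + be (ψ k) := by
    intro k
    have h1 : g (χ k) ≤ liminf (fun j => c (χ k) (χ j)) atTop :=
      liminf_le_liminf_comp hχt (fun j => hc0 _ j) (fun j => hcM _ j)
    have h2 : liminf (fun j => c (χ k) (χ j)) atTop
        ≤ liminf (fun j => a (χ k) (χ j) + b (χ k) (χ j)) atTop :=
      liminf_le_liminf (Eventually.of_forall fun j => hcab _ _)
        (isBoundedUnder_of ⟨0, fun j => hc0 _ _⟩)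
        (((haχ k).add (hbχ k)).isCoboundedUnder_ge)
    have h3 : liminf (fun j => a (χ k) (χ j) + b (χ k) (χ j)) atTop = al (ψ k) + be (ψ k) :=
      ((haχ k).add (hbχ k)).liminf_eq
    exact h1.trans (h2.trans_eq h3)
  have step3 : liminf (g ∘ χ) atTop ≤ A + B := by
    have hAB : Tendsto (fun k => al (ψ k) + be (ψ k)) atTop (𝓝 (A + B)) := hA.add hB
    have := liminf_le_liminf (Eventually.of_forall step2)
      (isBoundedUnder_of ⟨0, fun k => hg0 _⟩) (hAB.isCoboundedUnder_ge)
    exact this.trans_eq hAB.liminf_eq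
  calc liminf g atTop ≤ A + B := step1.trans step3
    _ ≤ opSemi T + opSemi S := add_le_add (le_opSemi hAmem) (le_opSemi hBmem)


lemma liminf_cmul {u : ℕ → ℝ} {r m M : ℝ} (hr : 0 ≤ r) (h0 : ∀ n, m ≤ u n)
    (h1 : ∀ n, u n ≤ M) :
    liminf (fun n => r * u n) atTop = r * liminf u atTop := by
  have hmono : Monotone (fun t : ℝ => r * t) := fun _ _ h => mul_le_mul_of_nonneg_left h hr
  exact (hmono.map_liminf_of_continuousAt u
    ((continuous_const.mul continuous_id).continuousAt)
    ((isBoundedUnder_of ⟨M, h1⟩).isCoboundedUnder_ge)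
    (isBoundedUnder_of ⟨m, h0⟩)).symm

lemma opSemi_smul (c : ℂ) (T : X →L[ℂ] X) : opSemi (c • T) = ‖c‖ * opSemi T := by
  set r := ‖c‖ with hrdef
  have hr : 0 ≤ r := norm_nonneg c
  have hpoint : ∀ (x : ℕ → X) (i j : ℕ),
      ‖(c • T) (x i) - (c • T) (x j)‖ = r * ‖T (x i) - T (x j)‖ := by
    intro x i j
    rw [ContinuousLinearMap.smul_apply, ContinuousLinearMap.smul_apply, ← smul_sub, norm_smul]
  have key : ∀ (x : ℕ → X), (∀ i, ‖x i‖ ≤ 1) →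
      liminf (fun i => liminf (fun j => ‖(c • T) (x i) - (c • T) (x j)‖) atTop) atTop
        = r * liminf (fun i => liminf (fun j => ‖T (x i) - T (x j)‖) atTop) atTop := by
    intro x hx
    have inner : ∀ i, liminf (fun j => ‖(c • T) (x i) - (c • T) (x j)‖) atTop
        = r * liminf (fun j => ‖T (x i) - T (x j)‖) atTop := by
      intro i
      simp only [hpoint x]
      exact liminf_cmul hr (fun j => norm_nonneg _) (fun j => dist_bound hx i j)
    simp only [inner]
    exact liminf_cmul hr
      (fun i => liminf_ge_of_bounds (fun j => norm_nonneg _) (fun j => dist_bound hx i j))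
      (fun i => liminf_le_of_bounds (fun j => norm_nonneg _) (fun j => dist_bound hx i j))
  have himg : semiSet (c • T) = (fun t => r * t) '' semiSet T := by
    ext v
    constructor
    · rintro ⟨x, hx, rfl⟩
      exact ⟨liminf (fun i => liminf (fun j => ‖T (x i) - T (x j)‖) atTop) atTop,
        ⟨x, hx, rfl⟩, (key x hx).symm⟩
    · rintro ⟨w, ⟨x, hx, rfl⟩, rfl⟩
      exact ⟨x, hx, (key x hx).symm⟩
  have hmono : Monotone (fun t : ℝ => r * t) := fun _ _ h => mul_le_mul_of_nonneg_left h hr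
  have := hmono.map_csSup_of_continuousAt (f := fun t : ℝ => r * t)
    ((continuous_const.mul continuous_id).continuousAt)
    ⟨0, zero_mem_semiSet T⟩ (bddAbove_semiSet T)
  rw [opSemi_eq, himg, ← this, opSemi_eq]



lemma liminf_cadd {u : ℕ → ℝ} {r m M : ℝ} (h0 : ∀ n, m ≤ u n) (h1 : ∀ n, u n ≤ M) :
    liminf (fun n => r + u n) atTop = r + liminf u atTop := by
  have hmono : Monotone (fun t : ℝ => r + t) := fun _ _ h => add_le_add le_rfl h
  exact (hmono.map_liminf_of_continuousAt u
    ((continuous_const.add continuous_id).continuousAt)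
    ((isBoundedUnder_of ⟨M, h1⟩).isCoboundedUnder_ge)
    (isBoundedUnder_of ⟨m, h0⟩)).symm

lemma semiSet_le_two_dist {T K : X →L[ℂ] X} (hK : IsCompactOperator (⇑K))
    {c : ℝ} (hc : c ∈ semiSet T) : c ≤ 2 * ‖T - K‖ := by
  obtain ⟨x, hx, rfl⟩ := hc
  set D : X →L[ℂ] X := T - K with hD
  -- convergent subsequence of K ∘ x
  obtain ⟨C, hCcomp, hCsub⟩ := hK.image_subset_compact_of_bounded
    (Metric.isBounded_closedBall (x := (0:X)) (r := 1))
  have hmem : ∀ n, K (x n) ∈ C := fun n =>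
    hCsub ⟨x n, mem_closedBall_zero_iff.2 (hx n), rfl⟩
  obtain ⟨y, -, ψ, hψ, hy⟩ := hCcomp.tendsto_subseq hmem
  -- pointwise estimate
  have hpt : ∀ i j, ‖T (x i) - T (x j)‖ ≤ 2 * ‖D‖ + ‖K (x i) - K (x j)‖ := by
    intro i j
    have : T (x i) - T (x j) = (D (x i) - D (x j)) + (K (x i) - K (x j)) := by
      simp [hD, ContinuousLinearMap.sub_apply]; abel
    rw [this]
    refine (norm_add_le _ _).trans (add_le_add ?_ le_rfl)
    calc ‖D (x i) - D (x j)‖ ≤ ‖D (x i)‖ + ‖D (x j)‖ := norm_sub_le _ _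
      _ ≤ ‖D‖ * ‖x i‖ + ‖D‖ * ‖x j‖ := add_le_add (D.le_opNorm _) (D.le_opNorm _)
      _ ≤ ‖D‖ * 1 + ‖D‖ * 1 := by have := hx i; have := hx j; gcongr
      _ = 2 * ‖D‖ := by ring
  set h : ℕ → ℝ := fun i => liminf (fun j => ‖K (x i) - K (x j)‖) atTop with hhdef
  have hKb : ∀ i j, ‖K (x i) - K (x j)‖ ≤ 2 * ‖K‖ := dist_bound hx
  have hKb0 : ∀ i j, (0:ℝ) ≤ ‖K (x i) - K (x j)‖ := fun i j => norm_nonneg _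
  have h0 : ∀ i, 0 ≤ h i := fun i => liminf_ge_of_bounds (hKb0 i) (hKb i)
  have hM : ∀ i, h i ≤ 2 * ‖K‖ := fun i => liminf_le_of_bounds (hKb0 i) (hKb i)
  -- inner estimate
  have inner : ∀ i, liminf (fun j => ‖T (x i) - T (x j)‖) atTop ≤ 2 * ‖D‖ + h i := by
    intro i
    have := liminf_le_liminf (u := fun j => ‖T (x i) - T (x j)‖)
      (v := fun j => 2 * ‖D‖ + ‖K (x i) - K (x j)‖)
      (Eventually.of_forall (hpt i))
      (isBoundedUnder_of ⟨0, fun j => norm_nonneg _⟩)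
      ((isBoundedUnder_of (f := (atTop : Filter ℕ)) ⟨2*‖D‖ + 2*‖K‖,
        fun j => add_le_add le_rfl (hKb i j)⟩).isCoboundedUnder_ge)
    rwa [liminf_cadd (hKb0 i) (hKb i)] at this
  -- h i ≤ ‖K (x i) - y‖
  have hlt : ∀ i, h i ≤ ‖K (x i) - y‖ := by
    intro i
    have hsub : liminf (fun j => ‖K (x i) - K (x j)‖) atTop
        ≤ liminf ((fun j => ‖K (x i) - K (x j)‖) ∘ ψ) atTop :=
      liminf_le_liminf_comp hψ.tendsto_atTop (hKb0 i) (hKb i)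
    have htend : Tendsto ((fun j => ‖K (x i) - K (x j)‖) ∘ ψ) atTop (𝓝 ‖K (x i) - y‖) :=
      ((continuous_const.sub continuous_id).norm.continuousAt.tendsto.comp hy)
    exact hsub.trans_eq htend.liminf_eq
  -- liminf of ‖K x i - y‖ is ≤ 0
  have hyb : ∀ i, ‖K (x i) - y‖ ≤ ‖K‖ + ‖y‖ := by
    intro i
    calc ‖K (x i) - y‖ ≤ ‖K (x i)‖ + ‖y‖ := norm_sub_le _ _
      _ ≤ ‖K‖ * ‖x i‖ + ‖y‖ := by gcongr; exact K.le_opNorm _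
      _ ≤ ‖K‖ * 1 + ‖y‖ := by have := hx i; gcongr
      _ = ‖K‖ + ‖y‖ := by ring
  have hzero : liminf (fun i => ‖K (x i) - y‖) atTop ≤ 0 := by
    have hsub : liminf (fun i => ‖K (x i) - y‖) atTop
        ≤ liminf ((fun i => ‖K (x i) - y‖) ∘ ψ) atTop :=
      liminf_le_liminf_comp hψ.tendsto_atTop (fun i => norm_nonneg _) hyb
    have htend : Tendsto ((fun i => ‖K (x i) - y‖) ∘ ψ) atTop (𝓝 0) :=
      tendsto_iff_norm_sub_tendsto_zero.1 hy
    exact hsub.trans_eq htend.liminf_eq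
  -- assemble
  have step : liminf (fun i => liminf (fun j => ‖T (x i) - T (x j)‖) atTop) atTop
      ≤ 2 * ‖D‖ + liminf h atTop := by
    have := liminf_le_liminf (u := fun i => liminf (fun j => ‖T (x i) - T (x j)‖) atTop)
      (v := fun i => 2 * ‖D‖ + h i) (Eventually.of_forall inner)
      (isBoundedUnder_of ⟨0, fun i =>
        liminf_ge_of_bounds (fun j => norm_nonneg _) (fun j => dist_bound hx i j)⟩)
      ((isBoundedUnder_of (f := (atTop : Filter ℕ)) ⟨2*‖D‖ + 2*‖K‖,
        fun i => add_le_add le_rfl (hM i)⟩).isCoboundedUnder_ge)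
    rwa [liminf_cadd h0 hM] at this
  have hh : liminf h atTop ≤ 0 := by
    have := liminf_le_liminf (u := h) (v := fun i => ‖K (x i) - y‖)
      (Eventually.of_forall hlt) (isBoundedUnder_of ⟨0, h0⟩)
      ((isBoundedUnder_of (f := (atTop : Filter ℕ)) ⟨‖K‖ + ‖y‖, hyb⟩).isCoboundedUnder_ge)
    exact this.trans hzero
  have := step.trans (by linarith : 2*‖D‖ + liminf h atTop ≤ 2*‖D‖)
  linarith [this]

lemma opSemi_le_two_distK (T : X →L[ℂ] X) : opSemi T ≤ 2 * distK T := by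
  have hne : Set.Nonempty {S : X →L[ℂ] X | IsCompactOperator (⇑S)} :=
    ⟨0, isCompactOperator_zero⟩
  have h2 : opSemi T / 2 ≤ Metric.infDist T {S : X →L[ℂ] X | IsCompactOperator (⇑S)} := by
    by_contra hlt
    push_neg at hlt
    obtain ⟨K, hK, hdk⟩ := (Metric.infDist_lt_iff hne).1 hlt
    have : opSemi T ≤ 2 * ‖T - K‖ := opSemi_le (fun c hc => semiSet_le_two_dist hK hc)
    rw [dist_eq_norm] at hdk
    linarith
  have heq : distK T = Metric.infDist T {S : X →L[ℂ] X | IsCompactOperator (⇑S)} := rfl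
  rw [heq]
  linarith


lemma isCompactOperator_of_finiteRank {F : X →L[ℂ] X}
    (h : FiniteDimensional ℂ (LinearMap.range (F : X →ₗ[ℂ] X))) :
    IsCompactOperator (⇑F) := by
  set V := LinearMap.range (F : X →ₗ[ℂ] X) with hV
  haveI : FiniteDimensional ℂ V := h
  haveI : ProperSpace V := FiniteDimensional.proper ℂ V
  refine ⟨(↑) '' Metric.closedBall (0 : V) ‖F‖, ?_, ?_⟩
  · exact (isCompact_closedBall (0 : V) ‖F‖).image continuous_subtype_val
  · apply Filter.mem_of_superset (Metric.closedBall_mem_nhds (0:X) one_pos)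
    intro x hx
    refine ⟨⟨F x, LinearMap.mem_range.2 ⟨x, rfl⟩⟩, ?_, rfl⟩
    rw [Metric.mem_closedBall, dist_zero_right]
    show ‖F x‖ ≤ ‖F‖
    calc ‖F x‖ ≤ ‖F‖ * ‖x‖ := F.le_opNorm x
      _ ≤ ‖F‖ * 1 := by
          have : ‖x‖ ≤ 1 := mem_closedBall_zero_iff.1 hx
          gcongr
      _ = ‖F‖ := mul_one _

lemma distK_le_aop (T F : X →L[ℂ] X)
    (h : FiniteDimensional ℂ (LinearMap.range (F : X →ₗ[ℂ] X))) :
    distK T ≤ ‖(ContinuousLinearMap.id ℂ X - F) ∘L (T ∘L (ContinuousLinearMap.id ℂ X - F))‖ := by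
  set K : X →L[ℂ] X := F ∘L T + T ∘L F - F ∘L (T ∘L F) with hKdef
  have hFc : IsCompactOperator (⇑F) := isCompactOperator_of_finiteRank h
  have h1 : IsCompactOperator ⇑(F ∘L T) := by
    exact (hFc.comp_clm T : IsCompactOperator (⇑F ∘ ⇑T))
  have h2 : IsCompactOperator ⇑(T ∘L F) := by
    exact (hFc.continuous_comp T.continuous : IsCompactOperator (⇑T ∘ ⇑F))
  have h3 : IsCompactOperator ⇑(F ∘L (T ∘L F)) := by
    exact (hFc.comp_clm (T ∘L F) : IsCompactOperator (⇑F ∘ ⇑(T ∘L F)))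
  have hKc : IsCompactOperator (⇑K) := by
    have : ⇑K = fun x => (F ∘L T) x + (T ∘L F) x - (F ∘L (T ∘L F)) x := by
      funext x; simp [hKdef]
    rw [this]
    exact (h1.add h2).sub h3
  have heq : T - K = (ContinuousLinearMap.id ℂ X - F) ∘L
      (T ∘L (ContinuousLinearMap.id ℂ X - F)) := by
    ext x
    simp only [ContinuousLinearMap.sub_apply, ContinuousLinearMap.comp_apply,
      ContinuousLinearMap.add_apply, ContinuousLinearMap.id_apply, hKdef, map_sub]
    abel
  calc distK T ≤ dist T K := Metric.infDist_le_dist_of_mem hKc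
    _ = ‖T - K‖ := dist_eq_norm _ _
    _ = _ := by rw [heq]


lemma lower_bound [CompleteSpace X] (lam : ℝ) (hlam : 0 ≤ lam)
    (hBAP : ∀ (s : Finset X) (ε : ℝ), 0 < ε → ∃ F : X →L[ℂ] X,
      FiniteDimensional ℂ (LinearMap.range (F : X →ₗ[ℂ] X)) ∧ ‖F‖ ≤ lam ∧
      ∀ x ∈ s, ‖F x - x‖ < ε) (T : X →L[ℂ] X) :
    ((1 + lam)⁻¹) ^ 2 * distK T ≤ opSemi T := by
  classical
  set I : X →L[ℂ] X := ContinuousLinearMap.id ℂ X with hI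
  set Aop : (X →L[ℂ] X) → (X →L[ℂ] X) := fun F => (I - F) ∘L (T ∘L (I - F)) with hAop
  have hpos : (0:ℝ) < 1 + lam := by linarith
  set s : ℝ := (1 + lam)⁻¹ with hs
  have hspos : 0 < s := by positivity
  have hs1 : s ≤ 1 := by
    rw [hs]; rw [inv_le_one_iff₀]; right; linarith
  have hsmul : s * (1 + lam) = 1 := inv_mul_cancel₀ (ne_of_gt hpos)
  have hd0 : 0 ≤ distK T := Metric.infDist_nonneg
  -- step existence
  have ex : ∀ (n : ℕ) (w : ℕ → (X →L[ℂ] X) × X), ∃ pr : (X →L[ℂ] X) × X,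
      FiniteDimensional ℂ (LinearMap.range (pr.1 : X →ₗ[ℂ] X)) ∧ ‖pr.1‖ ≤ lam ∧ ‖pr.2‖ ≤ 1 ∧
      (∀ m, m < n →
        ‖T ((w m).2 - (w m).1 (w m).2) - pr.1 (T ((w m).2 - (w m).1 (w m).2))‖ ≤ 1/(n+1)) ∧
      ‖Aop pr.1‖ - 1/(n+1) ≤ ‖(Aop pr.1) pr.2‖ := by
    intro n w
    have hε : (0:ℝ) < 1/(n+1) := by positivity
    obtain ⟨F, hfin, hnorm, happ⟩ := hBAP ((Finset.range n).image
      (fun m => T ((w m).2 - (w m).1 (w m).2))) (1/(n+1)) hε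
    have hr : ‖Aop F‖ - 1/(n+1) < ‖Aop F‖ := by linarith
    obtain ⟨z, hz1, hz2⟩ := (Aop F).exists_lt_apply_of_lt_opNorm hr
    refine ⟨(F, z), hfin, hnorm, hz1.le, ?_, hz2.le⟩
    intro m hm
    have hmem : T ((w m).2 - (w m).1 (w m).2) ∈ (Finset.range n).image
        (fun m => T ((w m).2 - (w m).1 (w m).2)) :=
      Finset.mem_image.2 ⟨m, Finset.mem_range.2 hm, rfl⟩
    have := happ _ hmem
    rw [norm_sub_rev] at this
    exact this.le
  choose p hp1 hp2 hp3 hp4 hp5 using ex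
  set W : ℕ → ℕ → (X →L[ℂ] X) × X :=
    fun n => Nat.rec (fun _ => (0,0)) (fun n wn => Function.update wn n (p n wn)) n with hW
  have hWS : ∀ n, W (n+1) = Function.update (W n) n (p n (W n)) := fun n => rfl
  set q : ℕ → (X →L[ℂ] X) × X := fun n => p n (W n) with hq
  have hcons : ∀ m n, m < n → W n m = q m := by
    intro m n hmn
    induction n with
    | zero => omega
    | succ n ih =>
      rcases Nat.lt_or_ge m n with h | h
      · rw [hWS n, Function.update_of_ne (by omega : m ≠ n)]
        exact ih h
      · have hmn' : m = n := by omega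
        subst hmn'
        rw [hWS m, Function.update_self]
  set F : ℕ → X →L[ℂ] X := fun n => (q n).1 with hFdef
  set z : ℕ → X := fun n => (q n).2 with hzdef
  set u : ℕ → X := fun n => z n - F n (z n) with hudef
  have hFnorm : ∀ n, ‖F n‖ ≤ lam := fun n => hp2 n (W n)
  have hznorm : ∀ n, ‖z n‖ ≤ 1 := fun n => hp3 n (W n)
  have happrox : ∀ m n, m < n → ‖T (u m) - F n (T (u m))‖ ≤ 1/(n+1) := by
    intro m n hmn
    have h := hp4 n (W n) m hmn
    rw [hcons m n hmn] at h
    exact h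
  have hattain : ∀ n, ‖Aop (F n)‖ - 1/(n+1) ≤ ‖(Aop (F n)) (z n)‖ := fun n => hp5 n (W n)
  have hdle : ∀ n, distK T ≤ ‖Aop (F n)‖ := fun n => distK_le_aop T (F n) (hp1 n (W n))
  -- the test sequence
  have hunorm : ∀ n, ‖u n‖ ≤ 1 + lam := by
    intro n
    calc ‖u n‖ ≤ ‖z n‖ + ‖F n (z n)‖ := norm_sub_le _ _
      _ ≤ 1 + ‖F n‖ * ‖z n‖ := add_le_add (hznorm n) ((F n).le_opNorm _)
      _ ≤ 1 + lam * 1 := by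
          refine add_le_add le_rfl (mul_le_mul (hFnorm n) (hznorm n) (norm_nonneg _) hlam)
      _ = 1 + lam := by ring
  set x : ℕ → X := fun n => s • u n with hxdef
  have hxnorm : ∀ n, ‖x n‖ ≤ 1 := by
    intro n
    rw [hxdef]
    simp only [norm_smul, Real.norm_eq_abs, abs_of_pos hspos]
    calc s * ‖u n‖ ≤ s * (1 + lam) := by
          exact mul_le_mul_of_nonneg_left (hunorm n) hspos.le
      _ = 1 := hsmul
  -- key inequality
  have hTx : ∀ n, T (x n) = s • T (u n) := fun n => T.map_smul_of_tower s (u n)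
  have hsub : ∀ (G : X →L[ℂ] X) (v : X), ‖G‖ ≤ lam → ‖v - G v‖ ≤ (1 + lam) * ‖v‖ := by
    intro G v hG
    calc ‖v - G v‖ ≤ ‖v‖ + ‖G v‖ := norm_sub_le _ _
      _ ≤ ‖v‖ + lam * ‖v‖ := add_le_add le_rfl
          ((G.le_opNorm v).trans (mul_le_mul_of_nonneg_right hG (norm_nonneg _)))
      _ = (1 + lam) * ‖v‖ := by ring
  have hkey : ∀ i j : ℕ, i < j →
      s ^ 2 * distK T - 2/((j:ℝ)+1) ≤ ‖T (x i) - T (x j)‖ := by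
    intro i j hij
    set δ : ℝ := 1/((j:ℝ)+1) with hδ
    have hδpos : 0 < δ := by positivity
    set nb : ℝ := ‖T (x i) - T (x j)‖ with hnb
    set P : ℝ := ‖(T (x i) - T (x j)) - F j (T (x i) - T (x j))‖ with hP
    have e1 : P ≤ (1 + lam) * nb := hsub (F j) _ (hFnorm j)
    have e2 : ‖T (x i) - F j (T (x i))‖ ≤ s * δ := by
      have : T (x i) - F j (T (x i)) = s • (T (u i) - F j (T (u i))) := by
        rw [hTx i, smul_sub, (F j).map_smul_of_tower]
      rw [this, norm_smul, Real.norm_eq_abs, abs_of_pos hspos]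
      refine mul_le_mul_of_nonneg_left ?_ hspos.le
      rw [hδ, one_div]
      simpa using happrox i j hij
    have e3 : s * distK T - s * δ ≤ ‖T (x j) - F j (T (x j))‖ := by
      have heq : T (x j) - F j (T (x j)) = s • ((Aop (F j)) (z j)) := by
        have hz : (Aop (F j)) (z j) = T (u j) - F j (T (u j)) := by
          simp only [hAop, hI, ContinuousLinearMap.comp_apply, ContinuousLinearMap.sub_apply,
            ContinuousLinearMap.id_apply, hudef]
        rw [hz, hTx j, smul_sub, (F j).map_smul_of_tower]
      rw [heq, norm_smul, Real.norm_eq_abs, abs_of_pos hspos]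
      have h1 : distK T - δ ≤ ‖(Aop (F j)) (z j)‖ := by
        have := hattain j
        have := hdle j
        simp only [hδ]
        linarith [hattain j, hdle j]
      calc s * distK T - s * δ = s * (distK T - δ) := by ring
        _ ≤ s * ‖(Aop (F j)) (z j)‖ := mul_le_mul_of_nonneg_left h1 hspos.le
    have e4 : ‖T (x j) - F j (T (x j))‖ - ‖T (x i) - F j (T (x i))‖ ≤ P := by
      have heq : (T (x i) - T (x j)) - F j (T (x i) - T (x j))
          = (T (x i) - F j (T (x i))) - (T (x j) - F j (T (x j))) := by
        rw [map_sub]; abel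
      rw [hP, heq, norm_sub_rev (T (x i) - F j (T (x i))) (T (x j) - F j (T (x j)))]
      exact norm_sub_norm_le _ _
    -- combine
    have c1 : s * distK T - 2 * (s * δ) ≤ P := by linarith
    have c2 : s * P ≤ nb := by
      have := mul_le_mul_of_nonneg_left e1 hspos.le
      calc s * P ≤ s * ((1 + lam) * nb) := this
        _ = (s * (1 + lam)) * nb := by ring
        _ = nb := by rw [hsmul, one_mul]
    have c3 : s * (s * distK T - 2 * (s * δ)) ≤ s * P :=
      mul_le_mul_of_nonneg_left c1 hspos.le
    have c4 : s ^ 2 * distK T - 2 * δ ≤ s * (s * distK T - 2 * (s * δ)) := by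
      have hss : s ^ 2 ≤ 1 := pow_le_one₀ hspos.le hs1
      have h2 : s ^ 2 * δ ≤ δ := by
        calc s ^ 2 * δ ≤ 1 * δ := mul_le_mul_of_nonneg_right hss hδpos.le
          _ = δ := one_mul δ
      have expand : s * (s * distK T - 2 * (s * δ)) = s ^ 2 * distK T - 2 * (s ^ 2 * δ) := by
        ring
      rw [expand]
      linarith
    have : (2:ℝ)/((j:ℝ)+1) = 2 * δ := by rw [hδ]; ring
    rw [this]
    linarith
  -- pass to liminf
  set t : ℝ := s ^ 2 * distK T with ht
  have hin : ∀ i, t ≤ liminf (fun j => ‖T (x i) - T (x j)‖) atTop := by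
    intro i
    have hb : ∀ ε : ℝ, 0 < ε → t - ε ≤ liminf (fun j => ‖T (x i) - T (x j)‖) atTop := by
      intro ε hε
      refine le_liminf_of_le
        ((isBoundedUnder_of (f := (atTop : Filter ℕ))
          ⟨2 * ‖T‖, fun j => dist_bound hxnorm i j⟩).isCoboundedUnder_ge) ?_
      filter_upwards [eventually_gt_atTop i, eventually_ge_atTop ⌈2/ε⌉₊] with j hj1 hj2
      have h2δ : 2/((j:ℝ)+1) ≤ ε := by
        rw [div_le_iff₀ (by positivity)]
        have hle : (2/ε : ℝ) ≤ (⌈2/ε⌉₊ : ℝ) := Nat.le_ceil _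
        have hj2' : ((⌈2/ε⌉₊ : ℕ) : ℝ) ≤ (j:ℝ) := Nat.cast_le.2 hj2
        calc (2:ℝ) = ε * (2/ε) := by field_simp
          _ ≤ ε * ((j:ℝ)+1) := by
              refine mul_le_mul_of_nonneg_left ?_ hε.le
              linarith
      linarith [hkey i j hj1]
    refine le_of_forall_pos_le_add ?_
    intro ε hε
    linarith [hb ε hε]
  have hout : t ≤ liminf
      (fun i => liminf (fun j => ‖T (x i) - T (x j)‖) atTop) atTop := by
    refine le_liminf_of_le
      ((isBoundedUnder_of (f := (atTop : Filter ℕ)) ⟨2 * ‖T‖, fun i =>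
        liminf_le_of_bounds (fun j => norm_nonneg _)
          (fun j => dist_bound hxnorm i j)⟩).isCoboundedUnder_ge)
      (Eventually.of_forall hin)
  exact le_trans hout (le_opSemi ⟨x, hxnorm, rfl⟩)


/-- if `X` has the `λ`-bounded approximation property then
`|·|` is a seminorm on `L(X)` with
`(1+λ)⁻² · dist(T, K(X)) ≤ |T| ≤ 2 · dist(T, K(X))`. -/
theorem stmt_4 [CompleteSpace X] (lam : ℝ) (hlam : 0 ≤ lam)
    (hBAP : ∀ (s : Finset X) (ε : ℝ), 0 < ε → ∃ F : X →L[ℂ] X,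
      FiniteDimensional ℂ (LinearMap.range (F : X →ₗ[ℂ] X)) ∧ ‖F‖ ≤ lam ∧
      ∀ x ∈ s, ‖F x - x‖ < ε) :
    (∀ T S : X →L[ℂ] X, opSemi (T + S) ≤ opSemi T + opSemi S) ∧
    (∀ (c : ℂ) (T : X →L[ℂ] X), opSemi (c • T) = ‖c‖ * opSemi T) ∧
    (∀ T : X →L[ℂ] X,
      ((1 + lam)⁻¹) ^ 2 * distK T ≤ opSemi T ∧ opSemi T ≤ 2 * distK T) := by
  exact ⟨opSemi_add_le, opSemi_smul,
    fun T => ⟨lower_bound lam hlam hBAP T, opSemi_le_two_distK T⟩⟩
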